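/- arXiv:1112.2398 — 2 statements merged into one kernel-verified Lean document; each statement's English description precedes it below -/
import Mathlib

section
/- π(26861; 4, 1) − π(26861; 4, 3) = 1, i.e., at x = 26861 the Chebyshev bias δ(x,4) = π(x;4,3) − π(x;4,1) first becomes negative, taking the value −1. -/
/-- Number of primes `p ≤ x` with `p ≡ a (mod q)`. -/
noncomputable def primePiMod (x : ℝ) (q a : ℕ) : ℕ :=
  ((Finset.range (⌊x⌋₊ + 1)).filter (fun p => p.Prime ∧ p % q = a)).card

/-! ### Auxiliary computational machinery -/

/-- The odd primes up to 163 (allowing trial division for `p ≤ 26896`). -/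
def PL : List ℕ := [3,5,7,11,13,17,19,23,29,31,37,41,43,47,53,59,61,67,71,73,79,83,89,97,101,103,107,109,113,127,131,137,139,149,151,157,163]

/-- Primality test, valid for odd `p ≤ 26896`. -/
def isP (p : ℕ) : Bool :=
  if p ≤ 164 then PL.contains p else PL.all (fun q => p % q != 0)

/-- Process the numbers `i` (≡1 mod 4) and `i+2` (≡3 mod 4), `f` times, stepping `i` by 4.
The counter `c` is the current value of `π(·;4,3) − π(·;4,1)`; return `none` if it
would go negative. -/
def runPair : ℕ → ℕ → ℕ → Option ℕ
  | _, 0, c => some c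
  | i, f+1, c =>
    match isP i, isP (i+2), c with
    | true,  _,     0   => none
    | true,  true,  k+1 => runPair (i+4) f (k+1)
    | true,  false, k+1 => runPair (i+4) f k
    | false, true,  0   => runPair (i+4) f 1
    | false, true,  k+1 => runPair (i+4) f (k+2)
    | false, false, 0   => runPair (i+4) f 0
    | false, false, k+1 => runPair (i+4) f (k+1)

/-- Outer loop: `f` blocks of 79 pairs (spanning 316 numbers each). -/
def runPairB : ℕ → ℕ → ℕ → Option ℕ
  | _, 0, c => some c
  | i, f+1, c =>
    match runPair i 79 c with
    | none => none
    | some 0 => runPairB (i+316) f 0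
    | some (k+1) => runPairB (i+316) f (k+1)

section PLfacts

attribute [local instance] Nat.decidablePrime

set_option maxRecDepth 4000 in
lemma PL_small : ∀ p ∈ Finset.range 165, p % 2 = 1 → (p ∈ PL ↔ p.Prime) := by decide

lemma PL_two_le : ∀ q ∈ PL, 2 ≤ q ∧ q ≤ 163 := by decide

end PLfacts

lemma isP_iff {p : ℕ} (hodd : p % 2 = 1) (hp : p ≤ 26896) : isP p = true ↔ p.Prime := by
  unfold isP
  rcases le_or_gt p 164 with h | h
  · rw [if_pos h]
    simpa using PL_small p (by simpa using by omega : p ∈ Finset.range 165) hodd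
  · rw [if_neg (by omega)]
    rw [List.all_eq_true]
    constructor
    · intro hall
      by_contra hnp
      set q := p.minFac with hq
      have hqp : q.Prime := Nat.minFac_prime (by omega)
      have hqd : q ∣ p := Nat.minFac_dvd p
      have hsq : q ^ 2 ≤ p := Nat.minFac_sq_le_self (by omega) hnp
      have hq164 : q ≤ 164 := by
        by_contra hq
        push_neg at hq
        have h2 : 165*165 ≤ q*q := Nat.mul_le_mul (by omega) (by omega)
        have h3 : q*q ≤ p := by rw [← pow_two]; exact hsq
        omega
      have hqodd : q % 2 = 1 := by
        rcases Nat.even_or_odd q with he | ho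
        · exfalso
          have : (2:ℕ) ∣ p := dvd_trans he.two_dvd hqd
          omega
        · exact Nat.odd_iff.mp ho
      have hqPL : q ∈ PL := (PL_small q (by simp; omega) hqodd).mpr hqp
      have := hall q hqPL
      simp only [bne_iff_ne, ne_eq, decide_eq_true_eq] at this
      exact this ((Nat.dvd_iff_mod_eq_zero).mp hqd)
    · intro hprime q hqPL
      obtain ⟨hq2, hq163⟩ := PL_two_le q hqPL
      simp only [bne_iff_ne, ne_eq, decide_eq_true_eq]
      intro hmod
      have hdvd : q ∣ p := (Nat.dvd_iff_mod_eq_zero).mpr hmod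
      rcases (Nat.Prime.eq_one_or_self_of_dvd hprime q hdvd) with h1 | h1 <;> omega

/-! ### Counting functions -/

noncomputable def cnt (n a : ℕ) : ℕ :=
  ((Finset.range (n+1)).filter (fun p => p.Prime ∧ p % 4 = a)).card

noncomputable def bias (n : ℕ) : ℤ := (cnt n 3 : ℤ) - cnt n 1

lemma primePiMod_eq (x : ℝ) (a : ℕ) : primePiMod x 4 a = cnt ⌊x⌋₊ a := rfl

lemma cnt_succ (n a : ℕ) :
    cnt (n+1) a = cnt n a + (if ((n+1).Prime ∧ (n+1) % 4 = a) then 1 else 0) := by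
  unfold cnt
  rw [Finset.range_add_one, Finset.filter_insert]
  split
  · rw [Finset.card_insert_of_notMem (by simp)]
  · simp

lemma cnt_zero (a : ℕ) : cnt 0 a = 0 := by
  simp [cnt, Finset.range_one, Finset.filter_singleton, Nat.not_prime_zero]

lemma bias_zero : bias 0 = 0 := by simp [bias, cnt_zero]

lemma bias_succ (n : ℕ) :
    bias (n+1) = bias n + (if ((n+1).Prime ∧ (n+1) % 4 = 3) then 1 else 0)
      - (if ((n+1).Prime ∧ (n+1) % 4 = 1) then 1 else 0) := by
  unfold bias
  rw [cnt_succ n 3, cnt_succ n 1]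
  push_cast
  ring

lemma bias_block (m : ℕ) (h : m % 4 = 0) :
    bias (m+1) = bias m - (if (m+1).Prime then 1 else 0) ∧
    bias (m+2) = bias (m+1) ∧
    bias (m+3) = bias (m+1) + (if (m+3).Prime then 1 else 0) ∧
    bias (m+4) = bias (m+3) := by
  have h1 : (m+1) % 4 = 1 := by omega
  have h2 : (m+2) % 4 = 2 := by omega
  have h3 : (m+3) % 4 = 3 := by omega
  have h4 : (m+4) % 4 = 0 := by omega
  have e1 : bias (m+1) = bias m - (if (m+1).Prime then 1 else 0) := by
    rw [bias_succ m]; by_cases hp : (m+1).Prime <;> simp [hp, h1]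
  have e2 : bias (m+2) = bias (m+1) := by
    have := bias_succ (m+1); rw [show m+1+1 = m+2 by ring] at this
    rw [this]; simp [h2]
  have e3 : bias (m+3) = bias (m+1) + (if (m+3).Prime then 1 else 0) := by
    have := bias_succ (m+2); rw [show m+2+1 = m+3 by ring] at this
    rw [this, e2]; by_cases hp : (m+3).Prime <;> simp [hp, h3]
  have e4 : bias (m+4) = bias (m+3) := by
    have := bias_succ (m+3); rw [show m+3+1 = m+4 by ring] at this
    rw [this]; simp [h4]
  exact ⟨e1, e2, e3, e4⟩

/-! ### Correctness of the checker -/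

lemma pair_spec : ∀ (f m : ℕ) (c c' : ℕ), m % 4 = 0 → m + 4*f ≤ 26896 →
    (c : ℤ) = bias m → runPair (m+1) f c = some c' →
    ((c' : ℤ) = bias (m + 4*f) ∧ ∀ j, m < j → j ≤ m + 4*f → 0 ≤ bias j) := by
  intro f
  induction f with
  | zero =>
    intro m c c' _ _ hc hrun
    simp only [runPair, Option.some.injEq] at hrun
    subst hrun
    exact ⟨by simpa using hc, fun j h1 h2 => absurd h1 (by omega)⟩
  | succ f ih =>
    intro m c c' hm hb hc hrun
    obtain ⟨e1, e2, e3, e4⟩ := bias_block m hm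
    have hodd1 : (m+1) % 2 = 1 := by omega
    have hodd3 : (m+3) % 2 = 1 := by omega
    have hiff1 := isP_iff hodd1 (by omega : m+1 ≤ 26896)
    have hiff3 := isP_iff hodd3 (by omega : m+3 ≤ 26896)
    have hm4 : (m+4) % 4 = 0 := by omega
    have hb4 : (m+4) + 4*f ≤ 26896 := by omega
    -- value of bias (m+1) and bias (m+3) in terms of booleans
    have key : ∀ c₁ : ℕ, (c₁ : ℤ) = bias (m+4) → 0 ≤ bias (m+1) →
        runPair (m+4+1) f c₁ = some c' →
        ((c' : ℤ) = bias (m + 4*(f+1)) ∧ ∀ j, m < j → j ≤ m + 4*(f+1) → 0 ≤ bias j) := by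
      intro c₁ hc₁ hpos1 hrun'
      obtain ⟨hv, hj⟩ := ih (m+4) c₁ c' hm4 hb4 hc₁ hrun'
      have hpos3 : 0 ≤ bias (m+3) := by
        rw [e3]; split <;> omega
      refine ⟨by rw [hv]; congr 1; omega, fun j h1 h2 => ?_⟩
      rcases Nat.lt_or_ge j (m+5) with hj5 | hj5
      · have : j = m+1 ∨ j = m+2 ∨ j = m+3 ∨ j = m+4 := by omega
        rcases this with rfl | rfl | rfl | rfl
        · exact hpos1
        · rw [e2]; exact hpos1
        · exact hpos3
        · rw [e4]; exact hpos3
      · exact hj j (by omega) (by omega)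
    have hstep : runPair (m+1) (f+1) c = some c' := hrun
    rcases hb1 : isP (m+1) with _ | _ <;> rcases hb3 : isP (m+1+2) with _ | _ <;>
      rcases c with _ | k <;>
      simp only [runPair, hb1, hb3] at hstep <;>
      rw [show m+1+2 = m+3 by ring] at hb3
    all_goals try exact absurd hstep (by simp)
    all_goals rw [show m+1+4 = m+4+1 by ring] at hstep
    all_goals
      first
      | (have hp1 : (m+1).Prime := hiff1.mp hb1)
      | (have hp1 : ¬ (m+1).Prime := by
          intro hh; rw [hiff1.mpr hh] at hb1; exact Bool.noConfusion hb1)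
    all_goals
      first
      | (have hp3 : (m+3).Prime := hiff3.mp hb3)
      | (have hp3 : ¬ (m+3).Prime := by
          intro hh; rw [hiff3.mpr hh] at hb3; exact Bool.noConfusion hb3)
    all_goals refine key _ ?_ ?_ hstep
    all_goals (try rw [e4, e3])
    all_goals rw [e1, ← hc]
    all_goals (first
      | (simp [hp1, hp3]; push_cast; omega)
      | (simp [hp1, hp3]; omega)
      | simp [hp1, hp3]
      | omega
      | (push_cast; omega))

set_option maxRecDepth 10000 in
lemma pairB_spec : ∀ (f m : ℕ) (c c' : ℕ), m % 4 = 0 → m + 316*f ≤ 26896 →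
    (c : ℤ) = bias m → runPairB (m+1) f c = some c' →
    ((c' : ℤ) = bias (m + 316*f) ∧ ∀ j, m < j → j ≤ m + 316*f → 0 ≤ bias j) := by
  intro f
  induction f with
  | zero =>
    intro m c c' _ _ hc hrun
    simp only [runPairB, Option.some.injEq] at hrun
    subst hrun
    exact ⟨by simpa using hc, fun j h1 h2 => absurd h1 (by omega)⟩
  | succ f ih =>
    intro m c c' hm hb hc hrun
    rcases hr : runPair (m+1) 79 c with _ | k <;>
      simp only [runPairB, hr] at hrun
    · exact absurd hrun (by simp)
    · obtain ⟨hk, hj1⟩ := pair_spec 79 m c k hm (by omega) hc hr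
      rw [show m + 4*79 = m + 316 by norm_num] at hk hj1
      have hm' : (m+316) % 4 = 0 := by omega
      have hb' : (m+316) + 316*f ≤ 26896 := by omega
      have hnext : runPairB (m+316+1) f k = some c' := by
        rcases k with _ | k2 <;> simpa using hrun
      obtain ⟨hv, hj2⟩ := ih (m+316) k c' hm' hb' hk hnext
      refine ⟨by rw [hv]; congr 1; omega, fun j h1 h2 => ?_⟩
      rcases Nat.lt_or_ge j (m+317) with h5 | h5
      · exact hj1 j h1 (by omega)
      · exact hj2 j (by omega) (by omega)

set_option maxRecDepth 10000 in
set_option maxHeartbeats 16000000 in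
lemma key_facts : runPairB 1 85 0 = some 0 ∧ isP 26861 = true := by decide

lemma bias_26860 : bias 26860 = 0 ∧ ∀ j, j ≤ 26860 → 0 ≤ bias j := by
  obtain ⟨hv, hj⟩ := pairB_spec 85 0 0 0 (by norm_num) (by norm_num)
    (by simpa using bias_zero.symm) key_facts.1
  rw [show 0 + 316*85 = 26860 by norm_num] at hv hj
  refine ⟨by simpa using hv.symm, fun j hjle => ?_⟩
  rcases Nat.eq_zero_or_pos j with rfl | hj0
  · rw [bias_zero]
  · exact hj j (by omega) hjle

lemma bias_26861 : bias 26861 = -1 := by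
  have hp : Nat.Prime 26861 := (isP_iff (by norm_num) (by norm_num)).mp key_facts.2
  have h := bias_succ 26860
  rw [show 26860+1 = 26861 by norm_num] at h
  rw [h, bias_26860.1]
  norm_num [hp]

/-- At `x = 26861` the Chebyshev bias `δ(x,4) = π(x;4,3) − π(x;4,1)` first
becomes negative, taking the value `−1`, i.e. `π(26861;4,1) − π(26861;4,3) = 1`. -/
theorem chebyshev_bias_first_negative :
    (primePiMod 26861 4 1 : ℤ) - primePiMod 26861 4 3 = 1 ∧
    ∀ x : ℝ, x < 26861 → 0 ≤ (primePiMod x 4 3 : ℤ) - primePiMod x 4 1 := by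
  constructor
  · have h1 : primePiMod 26861 4 1 = cnt 26861 1 := by
      rw [primePiMod_eq, Nat.floor_ofNat]
    have h3 : primePiMod 26861 4 3 = cnt 26861 3 := by
      rw [primePiMod_eq, Nat.floor_ofNat]
    have hb := bias_26861
    unfold bias at hb
    rw [h1, h3]
    omega
  · intro x hx
    rw [primePiMod_eq, primePiMod_eq]
    have hfl : ⌊x⌋₊ ≤ 26860 := by
      rcases le_or_gt x 0 with hx0 | hx0
      · rw [Nat.floor_of_nonpos hx0]; omega
      · have : ⌊x⌋₊ < 26861 := by
          rw [Nat.floor_lt hx0.le]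
          exact_mod_cast hx
        omega
    have := bias_26860.2 ⌊x⌋₊ hfl
    unfold bias at this
    omega
end

section
/- For the modulus q = 13, the smallest prime x at which the averaged Chebyshev bias δ(x,13) = −Σ_a (a/13) π(x;13,a) is negative is x = 2083. -/
instance : Fact (Nat.Prime 13) := ⟨by norm_num⟩

/-- The averaged Chebyshev bias `δ(x,p) = −Σ_a (a/p) π(x;p,a)` for an odd
prime modulus `p`. -/
noncomputable def chebyshevDelta (x : ℝ) (p : ℕ) [Fact p.Prime] : ℤ :=
  -∑ a ∈ Finset.Icc 1 (p - 1), legendreSym p (a : ℤ) * (primePiMod x p a : ℤ)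

/-- A kernel-friendly primality test, valid for `p ≤ 2115 = 46² - inf`. -/
def isPrime45 (p : ℕ) : Prop := 2 ≤ p ∧ ∀ m, m ≤ 45 → 2 ≤ m → m < p → ¬ m ∣ p

instance isPrime45.dec : DecidablePred isPrime45 := fun p => by
  unfold isPrime45; exact inferInstance

lemma isPrime45_iff {p : ℕ} (hp : p ≤ 2115) : isPrime45 p ↔ p.Prime := by
  constructor
  · rintro ⟨h2, hball⟩
    by_contra hnp
    have hmf : p.minFac ∣ p := Nat.minFac_dvd p
    have hmfp : p.minFac.Prime := Nat.minFac_prime (by omega)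
    have hsq : p.minFac ^ 2 ≤ p := Nat.minFac_sq_le_self (by omega) hnp
    have h45 : p.minFac ≤ 45 := by nlinarith [hmfp.two_le]
    have hlt : p.minFac < p := by
      rcases Nat.lt_or_ge p.minFac p with h | h
      · exact h
      · have := Nat.minFac_le (show 0 < p by omega)
        have heq : p.minFac = p := by omega
        rw [← heq] at hnp; exact absurd hmfp hnp
    exact hball p.minFac h45 hmfp.two_le hlt hmf
  · intro hp'
    refine ⟨hp'.two_le, fun m _ h2 hlt hdvd => ?_⟩
    rcases (Nat.dvd_prime hp').mp hdvd with rfl | rfl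
    · omega
    · omega

/-- Legendre symbol mod 13 as a lookup table. -/
def L13 : ℕ → ℤ := fun a => [0,1,-1,1,1,-1,-1,-1,-1,1,1,-1,1].getD a 0

/-- Kernel-friendly step function. -/
def step13 (m : ℕ) : ℤ :=
  if isPrime45 m then -L13 (m % 13) else 0

def F13 : ℕ → ℤ
  | 0 => 0
  | n+1 => F13 n + step13 (n+1)

/-- Check `0 ≤ F13 n, …, 0 ≤ F13 (n+k-1)` given `s = F13 n`, returning also
the final accumulator `F13 (n+k)`. -/
def inner13 : ℕ → ℕ → ℤ → Bool × ℤ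
  | 0, _, s => (true, s)
  | k+1, n, s =>
    match inner13 k (n+1) (s + step13 (n+1)) with
    | (b, t) => (decide (0 ≤ s) && b, t)

lemma step13_eq {m : ℕ} (hm : m ≤ 2115) :
    step13 m = if Nat.Prime m then -L13 (m % 13) else 0 := by
  unfold step13
  exact if_congr (isPrime45_iff hm) rfl rfl

lemma L13_spec : ∀ r ∈ Finset.range 13,
    (if r ∈ Finset.Icc 1 12 then (legendreSym 13 (r:ℤ)) else 0) = L13 r := by decide

lemma primePiMod_zero (a : ℕ) : primePiMod (0:ℝ) 13 a = 0 := by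
  unfold primePiMod
  simp [Finset.filter_eq_empty_iff, Nat.not_prime_zero]

lemma primePiMod_succ (n a : ℕ) :
    primePiMod ((n+1:ℕ):ℝ) 13 a =
      primePiMod ((n:ℕ):ℝ) 13 a + if ((n+1).Prime ∧ (n+1) % 13 = a) then 1 else 0 := by
  unfold primePiMod
  rw [Nat.floor_natCast, Nat.floor_natCast, Finset.range_add_one, Finset.filter_insert]
  split
  · rw [Finset.card_insert_of_notMem (by simp [Finset.mem_filter])]
  · simp

lemma chebyshevDelta_eq_F13 : ∀ n : ℕ, n ≤ 2115 → chebyshevDelta (n:ℝ) 13 = F13 n := by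
  intro n
  induction n with
  | zero =>
    intro _
    show chebyshevDelta ((0:ℕ):ℝ) 13 = F13 0
    rw [Nat.cast_zero]
    unfold chebyshevDelta
    simp [primePiMod_zero, F13]
  | succ n ih =>
    intro hn
    have ih' := ih (by omega)
    unfold chebyshevDelta at ih' ⊢
    have h12 : (13:ℕ) - 1 = 12 := rfl
    rw [h12] at ih' ⊢
    simp only [primePiMod_succ]
    simp only [Nat.cast_add, mul_add, Finset.sum_add_distrib, neg_add]
    rw [ih']
    rw [show F13 (n+1) = F13 n + step13 (n+1) from rfl]
    congr 1
    rw [step13_eq (show n+1 ≤ 2115 by omega)]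
    simp only [Nat.cast_ite, Nat.cast_one, Nat.cast_zero, mul_ite, mul_one, mul_zero]
    by_cases hp : (n+1).Prime
    · simp only [hp, true_and, if_true]
      rw [Finset.sum_ite_eq]
      have h13 : (n+1) % 13 < 13 := Nat.mod_lt _ (by norm_num)
      rw [L13_spec _ (Finset.mem_range.mpr h13)]
    · simp [hp]

lemma inner13_snd : ∀ k n, (inner13 k n (F13 n)).2 = F13 (n+k) := by
  intro k
  induction k with
  | zero => intro n; rfl
  | succ k ih =>
    intro n
    have h : F13 n + step13 (n+1) = F13 (n+1) := rfl
    rcases hr : inner13 k (n+1) (F13 n + step13 (n+1)) with ⟨b, t⟩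
    simp only [inner13, hr]
    rw [h] at hr
    have ht := ih (n+1)
    rw [hr] at ht
    rw [show n + (k+1) = n + 1 + k by omega]
    exact ht

lemma inner13_fst : ∀ k n, (inner13 k n (F13 n)).1 = true →
    ∀ m, n ≤ m → m < n + k → 0 ≤ F13 m := by
  intro k
  induction k with
  | zero => intro n _ m h1 h2; omega
  | succ k ih =>
    intro n h m h1 h2
    have hF : F13 n + step13 (n+1) = F13 (n+1) := rfl
    rcases hr : inner13 k (n+1) (F13 n + step13 (n+1)) with ⟨b, t⟩
    simp only [inner13, hr, Bool.and_eq_true, decide_eq_true_eq] at h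
    rcases Nat.eq_or_lt_of_le h1 with rfl | h1'
    · exact h.1
    · rw [hF] at hr
      exact ih (n+1) (by rw [hr]; exact h.2) m h1' (by omega)

lemma block13 (n : ℕ) (s t : ℤ) (h : inner13 64 n s = (true, t)) (hs : F13 n = s) :
    F13 (n+64) = t ∧ ∀ m, n ≤ m → m < n + 64 → 0 ≤ F13 m := by
  constructor
  · have h2 := inner13_snd 64 n
    rw [hs, h] at h2
    exact h2.symm
  · exact inner13_fst 64 n (by rw [hs, h])

lemma lastblock13 (s : ℤ) (h : inner13 35 2048 s = (true, -1)) (hs : F13 2048 = s) :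
    F13 2083 = -1 ∧ ∀ m, 2048 ≤ m → m < 2083 → 0 ≤ F13 m := by
  constructor
  · have h2 := inner13_snd 35 2048
    rw [hs, h] at h2
    exact h2.symm
  · exact inner13_fst 35 2048 (by rw [hs, h])

set_option maxRecDepth 10000 in
set_option maxHeartbeats 2000000 in
lemma F13_facts : (∀ m, m < 2083 → 0 ≤ F13 m) ∧ F13 2083 = -1 := by
  have b0 := block13 0 0 3 (by decide) rfl
  have b1 := block13 64 3 4 (by decide) b0.1
  have b2 := block13 128 4 2 (by decide) b1.1
  have b3 := block13 192 2 5 (by decide) b2.1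
  have b4 := block13 256 5 3 (by decide) b3.1
  have b5 := block13 320 3 5 (by decide) b4.1
  have b6 := block13 384 5 5 (by decide) b5.1
  have b7 := block13 448 5 10 (by decide) b6.1
  have b8 := block13 512 10 6 (by decide) b7.1
  have b9 := block13 576 6 10 (by decide) b8.1
  have b10 := block13 640 10 7 (by decide) b9.1
  have b11 := block13 704 7 8 (by decide) b10.1
  have b12 := block13 768 8 10 (by decide) b11.1
  have b13 := block13 832 10 9 (by decide) b12.1
  have b14 := block13 896 9 7 (by decide) b13.1
  have b15 := block13 960 7 9 (by decide) b14.1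
  have b16 := block13 1024 9 8 (by decide) b15.1
  have b17 := block13 1088 8 9 (by decide) b16.1
  have b18 := block13 1152 9 7 (by decide) b17.1
  have b19 := block13 1216 7 8 (by decide) b18.1
  have b20 := block13 1280 8 6 (by decide) b19.1
  have b21 := block13 1344 6 7 (by decide) b20.1
  have b22 := block13 1408 7 4 (by decide) b21.1
  have b23 := block13 1472 4 3 (by decide) b22.1
  have b24 := block13 1536 3 6 (by decide) b23.1
  have b25 := block13 1600 6 6 (by decide) b24.1
  have b26 := block13 1664 6 8 (by decide) b25.1
  have b27 := block13 1728 8 9 (by decide) b26.1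
  have b28 := block13 1792 9 8 (by decide) b27.1
  have b29 := block13 1856 8 8 (by decide) b28.1
  have b30 := block13 1920 8 4 (by decide) b29.1
  have b31 := block13 1984 4 2 (by decide) b30.1
  have bl := lastblock13 2 (by decide) b31.1
  refine ⟨?_, bl.1⟩
  intro m hm
  by_cases h0 : m < 64
  · exact b0.2 m (by omega) (by omega)
  by_cases h1 : m < 128
  · exact b1.2 m (by omega) (by omega)
  by_cases h2 : m < 192
  · exact b2.2 m (by omega) (by omega)
  by_cases h3 : m < 256
  · exact b3.2 m (by omega) (by omega)
  by_cases h4 : m < 320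
  · exact b4.2 m (by omega) (by omega)
  by_cases h5 : m < 384
  · exact b5.2 m (by omega) (by omega)
  by_cases h6 : m < 448
  · exact b6.2 m (by omega) (by omega)
  by_cases h7 : m < 512
  · exact b7.2 m (by omega) (by omega)
  by_cases h8 : m < 576
  · exact b8.2 m (by omega) (by omega)
  by_cases h9 : m < 640
  · exact b9.2 m (by omega) (by omega)
  by_cases h10 : m < 704
  · exact b10.2 m (by omega) (by omega)
  by_cases h11 : m < 768
  · exact b11.2 m (by omega) (by omega)
  by_cases h12 : m < 832
  · exact b12.2 m (by omega) (by omega)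
  by_cases h13 : m < 896
  · exact b13.2 m (by omega) (by omega)
  by_cases h14 : m < 960
  · exact b14.2 m (by omega) (by omega)
  by_cases h15 : m < 1024
  · exact b15.2 m (by omega) (by omega)
  by_cases h16 : m < 1088
  · exact b16.2 m (by omega) (by omega)
  by_cases h17 : m < 1152
  · exact b17.2 m (by omega) (by omega)
  by_cases h18 : m < 1216
  · exact b18.2 m (by omega) (by omega)
  by_cases h19 : m < 1280
  · exact b19.2 m (by omega) (by omega)
  by_cases h20 : m < 1344
  · exact b20.2 m (by omega) (by omega)
  by_cases h21 : m < 1408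
  · exact b21.2 m (by omega) (by omega)
  by_cases h22 : m < 1472
  · exact b22.2 m (by omega) (by omega)
  by_cases h23 : m < 1536
  · exact b23.2 m (by omega) (by omega)
  by_cases h24 : m < 1600
  · exact b24.2 m (by omega) (by omega)
  by_cases h25 : m < 1664
  · exact b25.2 m (by omega) (by omega)
  by_cases h26 : m < 1728
  · exact b26.2 m (by omega) (by omega)
  by_cases h27 : m < 1792
  · exact b27.2 m (by omega) (by omega)
  by_cases h28 : m < 1856
  · exact b28.2 m (by omega) (by omega)
  by_cases h29 : m < 1920
  · exact b29.2 m (by omega) (by omega)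
  by_cases h30 : m < 1984
  · exact b30.2 m (by omega) (by omega)
  by_cases h31 : m < 2048
  · exact b31.2 m (by omega) (by omega)
  exact bl.2 m (by omega) (by omega)

/-- For the modulus `q = 13`, the smallest prime `x` with `δ(x,13) < 0`
is `x = 2083`. -/
theorem chebyshev_bias_thirteen_first_negative :
    Nat.Prime 2083 ∧ chebyshevDelta 2083 13 < 0 ∧
    ∀ x : ℕ, x.Prime → x < 2083 → 0 ≤ chebyshevDelta x 13 := by
  refine ⟨by norm_num, ?_, ?_⟩
  · have h : (2083:ℝ) = ((2083:ℕ):ℝ) := by norm_num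
    rw [h, chebyshevDelta_eq_F13 2083 (by norm_num), F13_facts.2]
    norm_num
  · intro x _ hx
    rw [chebyshevDelta_eq_F13 x (by omega)]
    exact F13_facts.1 x hx
end
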